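/- The quantity (y·√(2d) − (y·2d − Δ²·√(2d))/√(4Δ² + 2d)) · (1/√(4π d)) · exp(−½·((y·√(2d) − Δ²)/√(4Δ² + 2d))²) tends to 0 as d → ∞, and moreover d^{1/2} times this quantity converges to Δ²·e^{−y²/2}/(2√π). -/

import Mathlib

open Real Filter

private lemma key_eq (y Δ a s sd p td : ℝ) (ha : a ≠ 0) (hsd : sd ≠ 0) (hp : p ≠ 0)
    (hsum : a + s ≠ 0) (hs2 : s ^ 2 = td) (ha2 : a ^ 2 = 4 * Δ ^ 2 + td) :
    sd * ((y * s - (y * td - Δ ^ 2 * s) / a) * (1 / (2 * p * sd))) =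
      Δ ^ 2 * (1 + 4 * y / (a + s)) * (s / a) * (1 / (2 * p)) := by
  subst hs2
  field_simp
  linear_combination (s * y) * ha2

private lemma sqrt_tendsto_atTop : Tendsto Real.sqrt atTop atTop := by
  rw [tendsto_atTop]
  intro b
  filter_upwards [eventually_ge_atTop (b ^ 2)] with d hd
  calc b ≤ |b| := le_abs_self b
    _ = Real.sqrt (b ^ 2) := (Real.sqrt_sq_eq_abs b).symm
    _ ≤ Real.sqrt d := Real.sqrt_le_sqrt hd

private lemma aux_main (y Δ : ℝ) :
    Tendsto (fun d : ℝ =>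
        Real.sqrt d *
          ((y * Real.sqrt (2 * d) -
              (y * (2 * d) - Δ ^ 2 * Real.sqrt (2 * d)) / Real.sqrt (4 * Δ ^ 2 + 2 * d)) *
            (1 / Real.sqrt (4 * Real.pi * d)) *
            Real.exp (-(1 / 2) *
              ((y * Real.sqrt (2 * d) - Δ ^ 2) / Real.sqrt (4 * Δ ^ 2 + 2 * d)) ^ 2)))
      atTop (nhds (Δ ^ 2 * Real.exp (-y ^ 2 / 2) / (2 * Real.sqrt Real.pi))) := by
  have hden : Tendsto (fun d : ℝ => 4 * Δ ^ 2 + 2 * d) atTop atTop := by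
    apply tendsto_atTop_add_const_left
    exact (tendsto_const_mul_atTop_of_pos two_pos).mpr tendsto_id
  have h2d : Tendsto (fun d : ℝ => 2 * d) atTop atTop :=
    (tendsto_const_mul_atTop_of_pos two_pos).mpr tendsto_id
  have ha : Tendsto (fun d : ℝ => Real.sqrt (4 * Δ ^ 2 + 2 * d)) atTop atTop :=
    sqrt_tendsto_atTop.comp hden
  have hinva : Tendsto (fun d : ℝ => (Δ:ℝ) ^ 2 / Real.sqrt (4 * Δ ^ 2 + 2 * d)) atTop (nhds 0) :=
    tendsto_const_nhds.div_atTop ha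
  have hsum : Tendsto (fun d : ℝ => Real.sqrt (4 * Δ ^ 2 + 2 * d) + Real.sqrt (2 * d))
      atTop atTop := Tendsto.atTop_add_nonneg ha (fun d => Real.sqrt_nonneg _)
  have h1 : Tendsto (fun d : ℝ =>
      4 * y / (Real.sqrt (4 * Δ ^ 2 + 2 * d) + Real.sqrt (2 * d))) atTop (nhds 0) :=
    tendsto_const_nhds.div_atTop hsum
  -- ratio √(2d)/√(4Δ²+2d) → 1
  have hq : Tendsto (fun d : ℝ => 2 * d / (4 * Δ ^ 2 + 2 * d)) atTop (nhds 1) := by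
    have h0 : Tendsto (fun d : ℝ => 4 * Δ ^ 2 / (4 * Δ ^ 2 + 2 * d)) atTop (nhds 0) :=
      tendsto_const_nhds.div_atTop hden
    have := (tendsto_const_nhds (x := (1:ℝ)) (f := atTop)).sub h0
    rw [sub_zero] at this
    refine this.congr' ?_
    filter_upwards [hden.eventually_gt_atTop 0] with d hd
    field_simp
    ring
  have hratio : Tendsto (fun d : ℝ => Real.sqrt (2 * d) / Real.sqrt (4 * Δ ^ 2 + 2 * d))
      atTop (nhds 1) := by
    have := hq.sqrt
    rw [Real.sqrt_one] at this
    refine this.congr' ?_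
    filter_upwards [eventually_ge_atTop (0:ℝ)] with d hd
    exact Real.sqrt_div (by positivity) _
  have ht : Tendsto (fun d : ℝ =>
      (y * Real.sqrt (2 * d) - Δ ^ 2) / Real.sqrt (4 * Δ ^ 2 + 2 * d)) atTop (nhds y) := by
    have := ((hratio.const_mul y).sub hinva)
    rw [mul_one, sub_zero] at this
    refine this.congr' ?_
    filter_upwards [hden.eventually_gt_atTop 0] with d hd
    have : Real.sqrt (4 * Δ ^ 2 + 2 * d) ≠ 0 := by positivity
    field_simp <;> ring
  have hE : Tendsto (fun d : ℝ => Real.exp (-(1 / 2) *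
      ((y * Real.sqrt (2 * d) - Δ ^ 2) / Real.sqrt (4 * Δ ^ 2 + 2 * d)) ^ 2)) atTop
      (nhds (Real.exp (-(1 / 2) * y ^ 2))) :=
    (Real.continuous_exp.tendsto _).comp ((ht.pow 2).const_mul (-(1/2)))
  -- the model function
  have hmain : Tendsto (fun d : ℝ =>
      Δ ^ 2 * (1 + 4 * y / (Real.sqrt (4 * Δ ^ 2 + 2 * d) + Real.sqrt (2 * d))) *
        (Real.sqrt (2 * d) / Real.sqrt (4 * Δ ^ 2 + 2 * d)) * (1 / (2 * Real.sqrt Real.pi)) *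
        Real.exp (-(1 / 2) *
          ((y * Real.sqrt (2 * d) - Δ ^ 2) / Real.sqrt (4 * Δ ^ 2 + 2 * d)) ^ 2)) atTop
      (nhds (Δ ^ 2 * (1 + 0) * 1 * (1 / (2 * Real.sqrt Real.pi)) *
        Real.exp (-(1 / 2) * y ^ 2))) :=
    ((((tendsto_const_nhds.add h1).const_mul (Δ ^ 2)).mul hratio).mul
      tendsto_const_nhds).mul hE
  have hlim : Δ ^ 2 * (1 + 0) * 1 * (1 / (2 * Real.sqrt Real.pi)) *
      Real.exp (-(1 / 2) * y ^ 2) = Δ ^ 2 * Real.exp (-y ^ 2 / 2) / (2 * Real.sqrt Real.pi) := by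
    rw [show -(1/2) * y ^ 2 = -y ^ 2 / 2 by ring]; ring
  rw [hlim] at hmain
  refine hmain.congr' ?_
  filter_upwards [eventually_gt_atTop (0:ℝ)] with d hd
  have ha0 : (0:ℝ) < Real.sqrt (4 * Δ ^ 2 + 2 * d) := Real.sqrt_pos.mpr (by positivity)
  have hs0 : (0:ℝ) < Real.sqrt (2 * d) := Real.sqrt_pos.mpr (by positivity)
  have hsd0 : (0:ℝ) < Real.sqrt d := Real.sqrt_pos.mpr hd
  have hp0 : (0:ℝ) < Real.sqrt Real.pi := Real.sqrt_pos.mpr Real.pi_pos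
  have ha2 : Real.sqrt (4 * Δ ^ 2 + 2 * d) ^ 2 = 4 * Δ ^ 2 + 2 * d :=
    Real.sq_sqrt (by positivity)
  have hs2 : Real.sqrt (2 * d) ^ 2 = 2 * d := Real.sq_sqrt (by positivity)
  have h4 : Real.sqrt (4 * Real.pi * d) = 2 * Real.sqrt Real.pi * Real.sqrt d := by
    rw [Real.sqrt_mul (by positivity), Real.sqrt_mul (by norm_num),
      show Real.sqrt 4 = 2 by
        rw [show (4:ℝ) = 2 ^ 2 by norm_num, Real.sqrt_sq (by norm_num)]]
  symm
  rw [h4]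
  have key := key_eq y Δ (Real.sqrt (4 * Δ ^ 2 + 2 * d)) (Real.sqrt (2 * d)) (Real.sqrt d)
    (Real.sqrt Real.pi) (2 * d) (ne_of_gt ha0) (ne_of_gt hsd0) (ne_of_gt hp0)
    (by positivity) hs2 ha2
  calc Real.sqrt d *
        ((y * Real.sqrt (2 * d) -
            (y * (2 * d) - Δ ^ 2 * Real.sqrt (2 * d)) / Real.sqrt (4 * Δ ^ 2 + 2 * d)) *
          (1 / (2 * Real.sqrt Real.pi * Real.sqrt d)) *
          Real.exp (-(1 / 2) *
            ((y * Real.sqrt (2 * d) - Δ ^ 2) / Real.sqrt (4 * Δ ^ 2 + 2 * d)) ^ 2)) =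
      (Real.sqrt d *
        ((y * Real.sqrt (2 * d) -
            (y * (2 * d) - Δ ^ 2 * Real.sqrt (2 * d)) / Real.sqrt (4 * Δ ^ 2 + 2 * d)) *
          (1 / (2 * Real.sqrt Real.pi * Real.sqrt d)))) *
        Real.exp (-(1 / 2) *
          ((y * Real.sqrt (2 * d) - Δ ^ 2) / Real.sqrt (4 * Δ ^ 2 + 2 * d)) ^ 2) := by ring
    _ = Δ ^ 2 * (1 + 4 * y / (Real.sqrt (4 * Δ ^ 2 + 2 * d) + Real.sqrt (2 * d))) *
        (Real.sqrt (2 * d) / Real.sqrt (4 * Δ ^ 2 + 2 * d)) * (1 / (2 * Real.sqrt Real.pi)) *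
        Real.exp (-(1 / 2) *
          ((y * Real.sqrt (2 * d) - Δ ^ 2) / Real.sqrt (4 * Δ ^ 2 + 2 * d)) ^ 2) := by
      rw [key]

theorem stmt_7 (y Δ : ℝ) :
    Tendsto (fun d : ℝ =>
        (y * Real.sqrt (2 * d) -
            (y * (2 * d) - Δ ^ 2 * Real.sqrt (2 * d)) / Real.sqrt (4 * Δ ^ 2 + 2 * d)) *
          (1 / Real.sqrt (4 * Real.pi * d)) *
          Real.exp (-(1 / 2) *
            ((y * Real.sqrt (2 * d) - Δ ^ 2) / Real.sqrt (4 * Δ ^ 2 + 2 * d)) ^ 2))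
      atTop (nhds 0) ∧
    Tendsto (fun d : ℝ =>
        Real.sqrt d *
          ((y * Real.sqrt (2 * d) -
              (y * (2 * d) - Δ ^ 2 * Real.sqrt (2 * d)) / Real.sqrt (4 * Δ ^ 2 + 2 * d)) *
            (1 / Real.sqrt (4 * Real.pi * d)) *
            Real.exp (-(1 / 2) *
              ((y * Real.sqrt (2 * d) - Δ ^ 2) / Real.sqrt (4 * Δ ^ 2 + 2 * d)) ^ 2)))
      atTop (nhds (Δ ^ 2 * Real.exp (-y ^ 2 / 2) / (2 * Real.sqrt Real.pi))) := by
  have h2 := aux_main y Δ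
  constructor
  · have hinv : Tendsto (fun d : ℝ => (Real.sqrt d)⁻¹) atTop (nhds 0) :=
      tendsto_inv_atTop_zero.comp sqrt_tendsto_atTop
    have := hinv.mul h2
    rw [zero_mul] at this
    refine this.congr' ?_
    filter_upwards [eventually_gt_atTop (0:ℝ)] with d hd
    have hsd0 : Real.sqrt d ≠ 0 := by positivity
    simp [inv_mul_cancel_left₀ hsd0]
  · exact h2
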